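/- Let X be a real vector space and let S ⊆ X be an invex set with respect to a map η : S × S → X that satisfies condition C. Then for every x, y ∈ S and every t₁, t₂ ∈ [0,1], one has η(y + t₂η(x,y), y + t₁η(x,y)) = (t₂ − t₁)η(x,y). -/

import Mathlib

/-- If `S` is an invex subset of a real vector space `X` with respect to
`η`, and `η` satisfies condition C, then for all `x, y ∈ S` and `t₁, t₂ ∈ [0,1]` we have
`η (y + t₂ • η x y) (y + t₁ • η x y) = (t₂ - t₁) • η x y`. -/
theorem condition_C_segment {X : Type*} [AddCommGroup X] [Module ℝ X]
    (S : Set X) (η : X → X → X)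
    (hinvex : ∀ x ∈ S, ∀ y ∈ S, ∀ t ∈ Set.Icc (0:ℝ) 1, y + t • η x y ∈ S)
    (hC1 : ∀ x ∈ S, ∀ y ∈ S, ∀ t ∈ Set.Icc (0:ℝ) 1,
      η y (y + t • η x y) = (-t) • η x y)
    (hC2 : ∀ x ∈ S, ∀ y ∈ S, ∀ t ∈ Set.Icc (0:ℝ) 1,
      η x (y + t • η x y) = (1 - t) • η x y) :
    ∀ x ∈ S, ∀ y ∈ S, ∀ t₁ ∈ Set.Icc (0:ℝ) 1, ∀ t₂ ∈ Set.Icc (0:ℝ) 1,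
      η (y + t₂ • η x y) (y + t₁ • η x y) = (t₂ - t₁) • η x y := by
  have hself : ∀ a ∈ S, η a a = 0 := by
    intro a ha
    have := hC1 a ha a ha 0 (by constructor <;> norm_num)
    simpa using this
  intro x hx y hy t₁ ht₁ t₂ ht₂
  obtain ⟨h10, h11⟩ := ht₁
  obtain ⟨h20, h21⟩ := ht₂
  have hw : y + t₂ • η x y ∈ S := hinvex x hx y hy t₂ ⟨h20, h21⟩
  set w := y + t₂ • η x y with hwdef
  rcases le_total t₁ t₂ with hle | hle
  · -- t₁ ≤ t₂ : go from w back toward y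
    rcases eq_or_lt_of_le h20 with h0 | h0
    · -- t₂ = 0, hence t₁ = 0
      have ht1 : t₁ = 0 := le_antisymm (h0 ▸ hle) h10
      subst ht1
      rw [← h0]
      simpa [hwdef, ← h0] using hself y hy
    · set r := (t₂ - t₁) / t₂ with hrdef
      have hr : r ∈ Set.Icc (0:ℝ) 1 := by
        constructor
        · exact div_nonneg (by linarith) (le_of_lt h0)
        · rw [div_le_one h0]; linarith
      have hyw : η y w = (-t₂) • η x y := hC1 x hx y hy t₂ ⟨h20, h21⟩
      have key := hC1 y hy w hw r hr
      have hpt : w + r • η y w = y + t₁ • η x y := by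
        rw [hyw, hwdef, smul_smul, add_assoc, ← add_smul]
        congr 2
        rw [hrdef]
        field_simp
        ring
      have hval : (-r) • η y w = (t₂ - t₁) • η x y := by
        rw [hyw, smul_smul]
        congr 1
        rw [hrdef]
        field_simp
      rw [hpt, hval] at key
      exact key
  · -- t₂ ≤ t₁ : go from w toward x
    rcases eq_or_lt_of_le h21 with h1 | h1
    · -- t₂ = 1, hence t₁ = 1
      have ht1 : t₁ = 1 := le_antisymm h11 (h1 ▸ hle)
      subst ht1
      rw [hwdef, h1] at hw ⊢
      simpa using hself _ hw
    · have hne : (1:ℝ) - t₂ ≠ 0 := by linarith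
      set s := (t₁ - t₂) / (1 - t₂) with hsdef
      have hs : s ∈ Set.Icc (0:ℝ) 1 := by
        constructor
        · exact div_nonneg (by linarith) (by linarith)
        · rw [div_le_one (by linarith)]; linarith
      have hxw : η x w = (1 - t₂) • η x y := hC2 x hx y hy t₂ ⟨h20, h21⟩
      have key := hC1 x hx w hw s hs
      have hpt : w + s • η x w = y + t₁ • η x y := by
        rw [hxw, hwdef, smul_smul, add_assoc, ← add_smul]
        congr 2
        rw [hsdef]
        field_simp
        ring
      have hval : (-s) • η x w = (t₂ - t₁) • η x y := by
        rw [hxw, smul_smul]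
        congr 1
        rw [hsdef]
        field_simp
        ring
      rw [hpt, hval] at key
      exact key
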